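/- Let p be a prime, q = p^r, n ≥ 3, and fix α_2 ∈ {0, …, p−1}. For each t ∈ {0,…,p−1} let F_t be the polynomial map of F_q^n given by F_t = (X_1 + c_t (X_2 + t)^{p−1} X_3^{p−1} ⋯ X_n^{p−1}, X_2, …, X_n), where (c_0,…,c_{p−1}) ∈ F_p^p is a vector such that Σ_t c_t (Y+t)^{p−1} = Y^{α_2} in F_p[Y]. Then the composition F_0 ∘ F_1 ∘ ⋯ ∘ F_{p−1} equals the map (X_1 + X_2^{α_2} X_3^{p−1} ⋯ X_n^{p−1}, X_2, …, X_n). -/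

import Mathlib

open Polynomial

/-- If `(c₀,…,c_{p-1}) ∈ F_p^p` satisfies `Σ_t c_t (Y+t)^(p-1) = Y^(α₂)` in `F_p[Y]`,
then the composition `F₀ ∘ F₁ ∘ ⋯ ∘ F_{p-1}` of the maps
`F_t = (X₁ + c_t (X₂+t)^(p-1) X₃^(p-1) ⋯ Xₙ^(p-1), X₂, …, Xₙ)` of `F_q^(n+3)` equals
`(X₁ + X₂^(α₂) X₃^(p-1) ⋯ Xₙ^(p-1), X₂, …, Xₙ)`.  Coordinates are indexed by
`Fin (n+3)` (so `X₁ = x 0`, `X₂ = x 1`, the remaining variables are indices `≥ 2`). -/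
theorem interpolation_composition (p r : ℕ) (hp : p.Prime) (hr : 1 ≤ r) (n : ℕ)
    (α₂ : ℕ) (hα₂ : α₂ ≤ p - 1)
    (F : Type*) [Field F] [Fintype F] [CharP F p] (hF : Fintype.card F = p ^ r)
    (c : Fin p → ZMod p)
    (hc : ∑ t : Fin p, C (c t) * (X + C ((t : ℕ) : ZMod p)) ^ (p - 1)
            = (X : Polynomial (ZMod p)) ^ α₂)
    (Ft : Fin p → (Fin (n + 3) → F) → (Fin (n + 3) → F))
    (hFt : ∀ t : Fin p, ∀ x : Fin (n + 3) → F,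
      Ft t x = Function.update x 0
        (x 0 + ZMod.castHom (dvd_refl p) F (c t) * (x 1 + ((t : ℕ) : F)) ^ (p - 1)
          * ∏ i ∈ Finset.univ.filter (fun i : Fin (n + 3) => 2 ≤ (i : ℕ)), x i ^ (p - 1))) :
    (List.ofFn Ft).foldr (· ∘ ·) id = fun x : Fin (n + 3) → F =>
      Function.update x 0
        (x 0 + x 1 ^ α₂
          * ∏ i ∈ Finset.univ.filter (fun i : Fin (n + 3) => 2 ≤ (i : ℕ)), x i ^ (p - 1)) := by
  set φ := ZMod.castHom (dvd_refl p) F with hφ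
  have key : ∀ L : List (Fin p), ∀ x : Fin (n + 3) → F,
      ((L.map Ft).foldr (· ∘ ·) id) x = Function.update x 0
        (x 0 + (L.map (fun t => φ (c t) * (x 1 + ((t : ℕ) : F)) ^ (p - 1))).sum
          * ∏ i ∈ Finset.univ.filter (fun i : Fin (n + 3) => 2 ≤ (i : ℕ)), x i ^ (p - 1)) := by
    intro L
    induction L with
    | nil => intro x; simp
    | cons t L ih =>
      intro x
      simp only [List.map_cons, List.foldr_cons, Function.comp_apply, ih, hFt]
      set y := Function.update x 0
        (x 0 + (L.map (fun t => φ (c t) * (x 1 + ((t : ℕ) : F)) ^ (p - 1))).sum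
          * ∏ i ∈ Finset.univ.filter (fun i : Fin (n + 3) => 2 ≤ (i : ℕ)), x i ^ (p - 1)) with hy
      have hy1 : y 1 = x 1 := by rw [hy]; simp [Function.update_of_ne]
      have hyi : ∀ i ∈ Finset.univ.filter (fun i : Fin (n + 3) => 2 ≤ (i : ℕ)), y i = x i := by
        intro i hi
        simp only [Finset.mem_filter] at hi
        have : i ≠ 0 := by
          intro h; subst h; simp at hi
        rw [hy, Function.update_of_ne this]
      have hy0 : y 0 = x 0 + (L.map (fun t => φ (c t) * (x 1 + ((t : ℕ) : F)) ^ (p - 1))).sum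
          * ∏ i ∈ Finset.univ.filter (fun i : Fin (n + 3) => 2 ≤ (i : ℕ)), x i ^ (p - 1) := by
        rw [hy]; simp
      rw [Finset.prod_congr rfl (fun i hi => by rw [hyi i hi]), hy1, hy0]
      rw [hy, Function.update_idem]
      refine congrArg (Function.update x 0) ?_
      rw [List.sum_cons]
      ring
  have hofn : List.ofFn Ft = (List.finRange p).map Ft := by
    rw [List.ofFn_eq_map]
  funext x
  rw [hofn, key]
  have h1 : ((List.finRange p).map (fun t => φ (c t) * (x 1 + ((t : ℕ) : F)) ^ (p - 1))).sum
      = ∑ t : Fin p, φ (c t) * (x 1 + ((t : ℕ) : F)) ^ (p - 1) := by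
    rw [← List.ofFn_eq_map, List.sum_ofFn]
  have h2 : ∑ t : Fin p, φ (c t) * (x 1 + ((t : ℕ) : F)) ^ (p - 1) = x 1 ^ α₂ := by
    have := congrArg (Polynomial.eval₂ φ (x 1)) hc
    simpa [eval₂_finset_sum, eval₂_mul, eval₂_pow, eval₂_add, eval₂_C, eval₂_X,
      map_natCast] using this
  rw [h1, h2]
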